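/- Let p_0, p_1 ∈ K with p_0 p_1 (p_0 − p_1) ≠ 0, and let w : Fin 4 → (Fin 2 → K) with w_i ≠ 0 for every i. Then p_1 · d(0,2) · d(3,1) + p_0 · d(0,3) · d(1,2) = 0 if and only if either (a) there exist a linear automorphism g of K^2 and nonzero scalars c_0, c_1, c_2, c_3 ∈ K with w_0 = c_0 · g(e_0), w_1 = c_1 · g(e_1), w_2 = c_2 · g(e_0 + e_1), w_3 = c_3 · g(p_0 e_0 + p_1 e_1), or (b) there exist three distinct indices i, j, k with d(i,j) = d(j,k) = d(i,k) = 0. -/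

import Mathlib

/-- The 2×2 determinant of the columns `w i` and `w j`. -/
def d2 {K : Type*} [Field K] {m : ℕ} (w : Fin m → Fin 2 → K) (i j : Fin m) : K :=
  w i 0 * w j 1 - w i 1 * w j 0

lemma d2_swap {K : Type*} [Field K] {m : ℕ} (w : Fin m → Fin 2 → K) (i j : Fin m) :
    d2 w j i = - d2 w i j := by simp [d2]; ring

lemma pluecker {K : Type*} [Field K] {m : ℕ} (w : Fin m → Fin 2 → K) (i j k l : Fin m) :
    d2 w i j * d2 w k l - d2 w i k * d2 w j l + d2 w i l * d2 w j k = 0 := by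
  simp [d2]; ring

lemma cramer2 {K : Type*} [Field K] {m : ℕ} (w : Fin m → Fin 2 → K) (i j x : Fin m) (c : Fin 2) :
    d2 w i j * w x c = d2 w x j * w i c + d2 w i x * w j c := by
  fin_cases c <;> simp [d2] <;> ring

lemma ne_zero_iff2 {K : Type*} [Field K] (v : Fin 2 → K) : v ≠ 0 ↔ v 0 ≠ 0 ∨ v 1 ≠ 0 := by
  constructor
  · intro h
    by_contra hc
    push_neg at hc
    exact h (funext fun c => by fin_cases c <;> simp [hc.1, hc.2])
  · rintro (h | h) hv <;> simp [hv] at h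

lemma exists_lam {K : Type*} [Field K] (u v : Fin 2 → K) (hu : u ≠ 0)
    (huv : u 0 * v 1 - u 1 * v 0 = 0) : ∃ lam, ∀ c, v c = lam * u c := by
  rcases (ne_zero_iff2 u).mp hu with h | h
  · refine ⟨v 0 / u 0, fun c => ?_⟩
    fin_cases c
    · field_simp
      simp only [Fin.zero_eta, Fin.mk_one, Fin.isValue]
    · field_simp
      simp only [Fin.zero_eta, Fin.mk_one, Fin.isValue]
      linear_combination huv
  · refine ⟨v 1 / u 1, fun c => ?_⟩
    fin_cases c
    · field_simp
      simp only [Fin.zero_eta, Fin.mk_one, Fin.isValue]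
      linear_combination -huv
    · field_simp
      simp only [Fin.zero_eta, Fin.mk_one, Fin.isValue]

lemma caseb {K : Type*} [Field K] (p₀ p₁ : K) (w : Fin 4 → Fin 2 → K)
    (i j k : Fin 4) (hij : i ≠ j) (hjk : j ≠ k) (hik : i ≠ k)
    (h1 : d2 w i j = 0) (h2 : d2 w j k = 0) (h3 : d2 w i k = 0) :
    p₁ * d2 w 0 2 * d2 w 3 1 + p₀ * d2 w 0 3 * d2 w 1 2 = 0 := by
  have hsym : ∀ a b : Fin 4, d2 w a b = 0 → d2 w b a = 0 := by
    intro a b h; unfold d2 at h ⊢; linear_combination -h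
  fin_cases i <;> fin_cases j <;> fin_cases k <;>
    simp_all [hsym _ _ h1, hsym _ _ h2, hsym _ _ h3]

lemma casea {K : Type*} [Field K] (p₀ p₁ : K) (w : Fin 4 → Fin 2 → K)
    (g : (Fin 2 → K) ≃ₗ[K] (Fin 2 → K)) (c₀ c₁ c₂ c₃ : K)
    (h0 : w 0 = c₀ • g ![1, 0]) (h1 : w 1 = c₁ • g ![0, 1])
    (h2 : w 2 = c₂ • g ![1, 1]) (h3 : w 3 = c₃ • g ![p₀, p₁]) :
    p₁ * d2 w 0 2 * d2 w 3 1 + p₀ * d2 w 0 3 * d2 w 1 2 = 0 := by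
  set u := g ![1, 0] with hu
  set v := g ![0, 1] with hv
  have hadd : g ![1, 1] = u + v := by
    rw [hu, hv, ← map_add]
    congr 1
    ext c; fin_cases c <;> simp
  have hpv : g ![p₀, p₁] = p₀ • u + p₁ • v := by
    rw [hu, hv, ← map_smul, ← map_smul, ← map_add]
    congr 1
    ext c; fin_cases c <;> simp
  have e0 : ∀ c, w 0 c = c₀ * u c := fun c => by rw [h0]; simp
  have e1 : ∀ c, w 1 c = c₁ * v c := fun c => by rw [h1]; simp
  have e2 : ∀ c, w 2 c = c₂ * (u c + v c) := fun c => by rw [h2, hadd]; simp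
  have e3 : ∀ c, w 3 c = c₃ * (p₀ * u c + p₁ * v c) := fun c => by rw [h3, hpv]; simp
  simp only [d2, e0, e1, e2, e3]
  ring

/-- vanishing of `p₁·d(0,2)·d(3,1) + p₀·d(0,3)·d(1,2)` characterises the closure
of the orbit of `(e₀, e₁, e₀+e₁, p₀e₀+p₁e₁)`. -/
theorem vanishing_iff_rank_4 (K : Type*) [Field K] [IsAlgClosed K] [CharZero K]
    (p₀ p₁ : K) (hp : p₀ * p₁ * (p₀ - p₁) ≠ 0)
    (w : Fin 4 → Fin 2 → K) (hw : ∀ i, w i ≠ 0) :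
    p₁ * d2 w 0 2 * d2 w 3 1 + p₀ * d2 w 0 3 * d2 w 1 2 = 0 ↔
      ((∃ g : (Fin 2 → K) ≃ₗ[K] (Fin 2 → K), ∃ c₀ c₁ c₂ c₃ : K,
          c₀ ≠ 0 ∧ c₁ ≠ 0 ∧ c₂ ≠ 0 ∧ c₃ ≠ 0 ∧
          w 0 = c₀ • g ![1, 0] ∧ w 1 = c₁ • g ![0, 1] ∧
          w 2 = c₂ • g ![1, 1] ∧ w 3 = c₃ • g ![p₀, p₁]) ∨
       (∃ i j k : Fin 4, i ≠ j ∧ j ≠ k ∧ i ≠ k ∧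
          d2 w i j = 0 ∧ d2 w j k = 0 ∧ d2 w i k = 0)) := by
  have hp₀ : p₀ ≠ 0 := fun h => hp (by rw [h]; ring)
  have hp₁ : p₁ ≠ 0 := fun h => hp (by rw [h]; ring)
  have hps : p₀ - p₁ ≠ 0 := fun h => hp (by rw [h, mul_zero])
  constructor
  · intro E
    by_cases hD : d2 w 0 1 = 0
    · -- w 0 and w 1 parallel
      obtain ⟨lam, hl⟩ := exists_lam (w 0) (w 1) (hw 0) hD
      have hlam : lam ≠ 0 := by
        intro h
        exact hw 1 (funext fun c => by rw [hl c, h, zero_mul]; rfl)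
      have h12 : d2 w 1 2 = lam * d2 w 0 2 := by
        simp only [d2, hl 0, hl 1]; ring
      have h13 : d2 w 1 3 = lam * d2 w 0 3 := by
        simp only [d2, hl 0, hl 1]; ring
      have h31 : d2 w 3 1 = -(lam * d2 w 0 3) := by
        simp only [d2, hl 0, hl 1]; ring
      have key : d2 w 0 2 * d2 w 0 3 = 0 := by
        rw [h12, h31] at E
        have h' : lam * ((p₀ - p₁) * (d2 w 0 2 * d2 w 0 3)) = 0 := by
          linear_combination E
        rcases mul_eq_zero.mp h' with h | h
        · exact absurd h hlam
        rcases mul_eq_zero.mp h with h | h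
        · exact absurd h hps
        · exact h
      rcases mul_eq_zero.mp key with h | h
      · exact Or.inr ⟨0, 1, 2, by decide, by decide, by decide, hD, by rw [h12, h]; ring, h⟩
      · exact Or.inr ⟨0, 1, 3, by decide, by decide, by decide, hD, by rw [h13, h]; ring, h⟩
    · -- w 0, w 1 independent
      set D := d2 w 0 1 with hDdef
      set A := d2 w 2 1 with hAdef
      set B := d2 w 0 2 with hBdef
      set A' := d2 w 3 1 with hA'def
      set B' := d2 w 0 3 with hB'def
      have h12 : d2 w 1 2 = -A := by rw [hAdef, d2_swap]
      have h13 : d2 w 1 3 = -A' := by rw [hA'def, d2_swap]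
      have hc2 : ∀ c, D * w 2 c = A * w 0 c + B * w 1 c := fun c => cramer2 w 0 1 2 c
      have hc3 : ∀ c, D * w 3 c = A' * w 0 c + B' * w 1 c := fun c => cramer2 w 0 1 3 c
      have hrel : p₁ * A' * B = p₀ * A * B' := by
        rw [h12] at E
        linear_combination E
      have hd23 : D * d2 w 2 3 = A * B' - A' * B := by
        have hpl := pluecker w 0 1 2 3
        rw [h12, h13] at hpl
        linear_combination hpl
      have hnz2 : ¬(A = 0 ∧ B = 0) := by
        rintro ⟨hA, hB⟩
        refine hw 2 (funext fun c => ?_)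
        have h := hc2 c
        rw [hA, hB, zero_mul, zero_mul, add_zero] at h
        simpa using (mul_eq_zero.mp h).resolve_left hD
      have hnz3 : ¬(A' = 0 ∧ B' = 0) := by
        rintro ⟨hA', hB'⟩
        refine hw 3 (funext fun c => ?_)
        have h := hc3 c
        rw [hA', hB', zero_mul, zero_mul, add_zero] at h
        simpa using (mul_eq_zero.mp h).resolve_left hD
      by_cases hB : B = 0
      · have hA : A ≠ 0 := fun h => hnz2 ⟨h, hB⟩
        have hB' : B' = 0 := by
          have h : p₀ * A * B' = 0 := by rw [← hrel, hB]; ring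
          rcases mul_eq_zero.mp h with h' | h'
          · exact absurd h' (mul_ne_zero hp₀ hA)
          · exact h'
        have h23 : d2 w 2 3 = 0 := by
          have h := hd23
          rw [hB, hB'] at h
          have h' : D * d2 w 2 3 = 0 := by rw [h]; ring
          exact (mul_eq_zero.mp h').resolve_left hD
        exact Or.inr ⟨0, 2, 3, by decide, by decide, by decide, hBdef ▸ hB, h23, hB'def ▸ hB'⟩
      by_cases hA : A = 0
      · have hA' : A' = 0 := by
          have h : p₁ * A' * B = 0 := by rw [hrel, hA]; ring
          rcases mul_eq_zero.mp h with h' | h'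
          · rcases mul_eq_zero.mp h' with h'' | h''
            · exact absurd h'' hp₁
            · exact h''
          · exact absurd h' hB
        have h23 : d2 w 2 3 = 0 := by
          have h := hd23
          rw [hA, hA'] at h
          have h' : D * d2 w 2 3 = 0 := by rw [h]; ring
          exact (mul_eq_zero.mp h').resolve_left hD
        refine Or.inr ⟨1, 2, 3, by decide, by decide, by decide, ?_, h23, ?_⟩
        · rw [h12, hA, neg_zero]
        · rw [h13, hA', neg_zero]
      by_cases hA' : A' = 0
      · have hB' : B' = 0 := by
          have h : p₀ * A * B' = 0 := by rw [← hrel, hA']; ring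
          rcases mul_eq_zero.mp h with h' | h'
          · exact absurd h' (mul_ne_zero hp₀ hA)
          · exact h'
        exact absurd (⟨hA', hB'⟩ : A' = 0 ∧ B' = 0) hnz3
      have hB' : B' ≠ 0 := by
        intro h
        have h' : p₁ * A' * B = 0 := by rw [hrel, h]; ring
        rcases mul_eq_zero.mp h' with h'' | h''
        · rcases mul_eq_zero.mp h'' with h3 | h3
          · exact absurd h3 hp₁
          · exact absurd h3 hA'
        · exact absurd h'' hB
      -- main case: construct the linear automorphism
      set M : Matrix (Fin 2) (Fin 2) K :=
        !![A * w 0 0, B * w 1 0; A * w 0 1, B * w 1 1] with hM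
      have hdet : M.det = A * B * D := by
        rw [hM, Matrix.det_fin_two_of, hDdef]
        unfold d2
        ring
      have hdet0 : M.det ≠ 0 := by
        rw [hdet]; exact mul_ne_zero (mul_ne_zero hA hB) hD
      letI : Invertible M.det := invertibleOfNonzero hdet0
      letI hMinv : Invertible M := M.invertibleOfDetInvertible
      have gapp : ∀ x, (M.toLinearEquiv' hMinv) x = M.mulVec x := fun x => rfl
      refine Or.inl ⟨M.toLinearEquiv' hMinv, A⁻¹, B⁻¹, D⁻¹, A' * (D * (p₀ * A))⁻¹,
        inv_ne_zero hA, inv_ne_zero hB, inv_ne_zero hD,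
        mul_ne_zero hA' (inv_ne_zero (mul_ne_zero hD (mul_ne_zero hp₀ hA))),
        ?_, ?_, ?_, ?_⟩
      · funext c
        rw [Pi.smul_apply, gapp, smul_eq_mul]
        fin_cases c <;>
          simp [hM, Matrix.mulVec, dotProduct, Fin.sum_univ_two] <;>
          field_simp
      · funext c
        rw [Pi.smul_apply, gapp, smul_eq_mul]
        fin_cases c <;>
          simp [hM, Matrix.mulVec, dotProduct, Fin.sum_univ_two] <;>
          field_simp
      · refine funext fun c => ?_
        rw [Pi.smul_apply, gapp, smul_eq_mul]
        fin_cases c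
        · have hcc := hc2 0
          simp only [hM, Matrix.mulVec, dotProduct, Fin.sum_univ_two,
            Matrix.cons_val', Matrix.cons_val_zero, Matrix.cons_val_one, Matrix.head_cons,
            Matrix.empty_val', Matrix.cons_val_fin_one, Matrix.head_fin_const,
            Matrix.of_apply, Fin.zero_eta, Fin.mk_one, Fin.isValue]
          field_simp
          linear_combination hcc
        · have hcc := hc2 1
          simp only [hM, Matrix.mulVec, dotProduct, Fin.sum_univ_two,
            Matrix.cons_val', Matrix.cons_val_zero, Matrix.cons_val_one, Matrix.head_cons,
            Matrix.empty_val', Matrix.cons_val_fin_one, Matrix.head_fin_const,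
            Matrix.of_apply, Fin.zero_eta, Fin.mk_one, Fin.isValue]
          field_simp
          linear_combination hcc
      · refine funext fun c => ?_
        rw [Pi.smul_apply, gapp, smul_eq_mul]
        fin_cases c
        · have hcc := hc3 0
          simp only [hM, Matrix.mulVec, dotProduct, Fin.sum_univ_two,
            Matrix.cons_val', Matrix.cons_val_zero, Matrix.cons_val_one, Matrix.head_cons,
            Matrix.empty_val', Matrix.cons_val_fin_one, Matrix.head_fin_const,
            Matrix.of_apply, Fin.zero_eta, Fin.mk_one, Fin.isValue]
          field_simp
          linear_combination (p₀ * A) * hcc - w 1 0 * hrel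
        · have hcc := hc3 1
          simp only [hM, Matrix.mulVec, dotProduct, Fin.sum_univ_two,
            Matrix.cons_val', Matrix.cons_val_zero, Matrix.cons_val_one, Matrix.head_cons,
            Matrix.empty_val', Matrix.cons_val_fin_one, Matrix.head_fin_const,
            Matrix.of_apply, Fin.zero_eta, Fin.mk_one, Fin.isValue]
          field_simp
          linear_combination (p₀ * A) * hcc - w 1 1 * hrel
  · rintro (⟨g, c₀, c₁, c₂, c₃, _, _, _, _, h0, h1, h2, h3⟩ | ⟨i, j, k, hij, hjk, hik, h1, h2, h3⟩)
    · exact casea p₀ p₁ w g c₀ c₁ c₂ c₃ h0 h1 h2 h3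
    · exact caseb p₀ p₁ w i j k hij hjk hik h1 h2 h3
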